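/- For every n ≥ 0, the number of walks of length n constrained to the first octant (all positions (x,y) satisfy x ≥ y ≥ 0) equals the number of walks of length n constrained to the first quadrant (all positions satisfy x ≥ 0 and y ≥ 0) that end on the x-axis. -/

import Mathlib

/-- A walk of length `n` with unit steps N, S, E, W. -/
def IsWalk {n : ℕ} (w : Fin n → ℤ × ℤ) : Prop :=
  ∀ l, w l = (0, 1) ∨ w l = (0, -1) ∨ w l = (1, 0) ∨ w l = (-1, 0)

/-- Position of the walk `w` after `a` steps. -/
def pos {n : ℕ} (w : Fin n → ℤ × ℤ) (a : ℕ) : ℤ × ℤ :=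
  ∑ l ∈ Finset.univ.filter (fun l : Fin n => (l : ℕ) < a), w l

namespace W10

def stepv : Fin 4 → ℤ × ℤ := ![(0,1),(0,-1),(1,0),(-1,0)]

/-- number of `P`-constrained walks of length `n` ending at `e` (in step-index form) -/
noncomputable def C (P : ℤ × ℤ → Prop) (n : ℕ) (e : ℤ × ℤ) : ℕ :=
  Nat.card {f : Fin n → Fin 4 //
    (∀ a ≤ n, P (pos (stepv ∘ f) a)) ∧ pos (stepv ∘ f) n = e}

lemma card_fiber {α : Type*} [Finite α] {ι : Type*} [Fintype ι] (g : α → ι) :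
    Nat.card α = ∑ i : ι, Nat.card {a : α // g a = i} := by
  letI := Fintype.ofFinite α
  classical
  rw [← Nat.card_congr (Equiv.sigmaFiberEquiv g), Nat.card_eq_fintype_card,
    Fintype.card_sigma]
  simp [Nat.card_eq_fintype_card]

end W10

namespace W10

lemma pos_eq {n : ℕ} (w : Fin n → ℤ × ℤ) (a : ℕ) :
    pos w a = ∑ l : Fin n, if (l : ℕ) < a then w l else 0 := by
  rw [pos, Finset.sum_filter]

lemma pos_zero {n : ℕ} (w : Fin n → ℤ × ℤ) : pos w 0 = 0 := by
  simp [pos_eq]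

lemma pos_init {n : ℕ} (w : Fin (n+1) → ℤ × ℤ) (a : ℕ) (ha : a ≤ n) :
    pos (Fin.init w) a = pos w a := by
  rw [pos_eq, pos_eq, Fin.sum_univ_castSucc (f := fun l : Fin (n+1) => if (l : ℕ) < a then w l else 0)]
  have h1 : ¬ ((Fin.last n : ℕ) < a) := by simp [Fin.last]; omega
  simp only [h1, if_false, Fin.coe_castSucc, add_zero, Fin.init]

lemma pos_last {n : ℕ} (w : Fin (n+1) → ℤ × ℤ) :
    pos w (n+1) = pos w n + w (Fin.last n) := by
  rw [pos_eq, pos_eq,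
    Fin.sum_univ_castSucc (f := fun l : Fin (n+1) => if (l : ℕ) < n + 1 then w l else 0),
    Fin.sum_univ_castSucc (f := fun l : Fin (n+1) => if (l : ℕ) < n then w l else 0)]
  have h1 : ∀ l : Fin n, ((l : ℕ) < n + 1) := fun l => by omega
  have h2 : ∀ l : Fin n, ((l : ℕ) < n) := fun l => l.isLt
  simp [h1, h2, Fin.last]

lemma comp_init {n : ℕ} (f : Fin (n+1) → Fin 4) :
    stepv ∘ Fin.init f = Fin.init (stepv ∘ f) := rfl

lemma comp_snoc {n : ℕ} (g : Fin n → Fin 4) (s : Fin 4) :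
    stepv ∘ Fin.snoc g s = Fin.snoc (stepv ∘ g) (stepv s) := by
  funext i
  refine Fin.lastCases ?_ ?_ i <;> simp

lemma C_eq_zero {P : ℤ × ℤ → Prop} {n : ℕ} {e : ℤ × ℤ} (h : ¬ P e) : C P n e = 0 := by
  rw [C, Nat.card_eq_zero]
  left
  constructor
  rintro ⟨f, hf, he⟩
  exact h (he ▸ hf n le_rfl)

lemma C_zero {P : ℤ × ℤ → Prop} (hP : P 0) (e : ℤ × ℤ) :
    C P 0 e = if e = 0 then 1 else 0 := by
  split_ifs with he
  · subst he
    rw [C, Nat.card_congr (Equiv.subtypeUnivEquiv ?_)]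
    · simp [Nat.card_eq_fintype_card]
    · intro f
      refine ⟨fun a ha => ?_, pos_zero _⟩
      interval_cases a
      rw [pos_zero]; exact hP
  · rw [C, Nat.card_eq_zero]
    left; constructor
    rintro ⟨f, hf, hend⟩
    rw [pos_zero] at hend
    exact he hend.symm

lemma C_succ (P : ℤ × ℤ → Prop) (n : ℕ) (e : ℤ × ℤ) (hPe : P e) :
    C P (n+1) e = ∑ s : Fin 4, C P n (e - stepv s) := by
  rw [C, card_fiber (g := fun x : {f : Fin (n+1) → Fin 4 //
    (∀ a ≤ n+1, P (pos (stepv ∘ f) a)) ∧ pos (stepv ∘ f) (n+1) = e} => x.1 (Fin.last n))]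
  refine Finset.sum_congr rfl fun s _ => Nat.card_congr ?_
  refine ⟨fun x => ⟨Fin.init x.1.1, ?_, ?_⟩, fun y => ⟨⟨Fin.snoc y.1 s, ?_, ?_⟩, by simp⟩, ?_, ?_⟩
  · intro a ha
    rw [comp_init, pos_init _ a ha]
    exact x.1.2.1 a (by omega)
  · rw [comp_init, pos_init _ n le_rfl]
    have h := pos_last (stepv ∘ x.1.1)
    rw [x.1.2.2] at h
    have hs : x.1.1 (Fin.last n) = s := x.2
    rw [Function.comp_apply, hs] at h
    exact eq_sub_of_add_eq h.symm
  · intro a ha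
    rw [comp_snoc]
    rcases Nat.lt_succ_iff_lt_or_eq.mp (Nat.lt_succ_of_le ha) with h' | h'
    · have ha' : a ≤ n := by omega
      rw [← pos_init _ a ha', Fin.init_snoc]
      exact y.2.1 a ha'
    · subst h'
      rw [pos_last, Fin.snoc_last, ← pos_init _ n le_rfl, Fin.init_snoc, y.2.2,
        sub_add_cancel]
      exact hPe
  · rw [comp_snoc, pos_last, Fin.snoc_last, ← pos_init _ n le_rfl, Fin.init_snoc, y.2.2,
      sub_add_cancel]
  · rintro ⟨⟨f, hf⟩, hs⟩
    apply Subtype.ext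
    apply Subtype.ext
    simp only at hs ⊢
    rw [← hs, Fin.snoc_init_self]
  · rintro ⟨g, hg⟩
    apply Subtype.ext
    simp [Fin.init_snoc]

end W10

namespace W10

noncomputable def box (n : ℕ) : Finset (ℤ × ℤ) :=
  Finset.Icc (-(n:ℤ)) n ×ˢ Finset.Icc (-(n:ℤ)) n

lemma mem_box {n : ℕ} {p : ℤ × ℤ} :
    p ∈ box n ↔ (-(n:ℤ) ≤ p.1 ∧ p.1 ≤ n) ∧ (-(n:ℤ) ≤ p.2 ∧ p.2 ≤ n) := by
  simp [box, Finset.mem_product, Finset.mem_Icc]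

lemma stepv_bound (s : Fin 4) :
    -1 ≤ (stepv s).1 ∧ (stepv s).1 ≤ 1 ∧ -1 ≤ (stepv s).2 ∧ (stepv s).2 ≤ 1 := by
  fin_cases s <;> simp [stepv]

lemma pos_bound : ∀ (n : ℕ) (f : Fin n → Fin 4), pos (stepv ∘ f) n ∈ box n := by
  intro n
  induction n with
  | zero => intro f; rw [pos_zero]; simp [mem_box]
  | succ n ih =>
    intro f
    have h := ih (Fin.init f)
    rw [comp_init, pos_init _ n le_rfl] at h
    rw [pos_last]
    rw [mem_box] at h ⊢
    have hb := stepv_bound (f (Fin.last n))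
    push_cast at h ⊢
    simp only [Prod.fst_add, Prod.snd_add, Function.comp_apply]
    constructor <;> constructor <;> omega

lemma C_end_mem_box {P : ℤ × ℤ → Prop} {n : ℕ} {e : ℤ × ℤ} (h : C P n e ≠ 0) :
    e ∈ box n := by
  rw [C, Nat.card_ne_zero] at h
  obtain ⟨⟨f, _, hend⟩⟩ := h.1
  exact hend ▸ pos_bound n f

lemma C_P_of_ne_zero {P : ℤ × ℤ → Prop} {n : ℕ} {e : ℤ × ℤ} (h : C P n e ≠ 0) : P e := by
  by_contra hP
  exact h (C_eq_zero hP)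

def Poct (p : ℤ × ℤ) : Prop := p.2 ≤ p.1 ∧ 0 ≤ p.2
def Pquad (p : ℤ × ℤ) : Prop := 0 ≤ p.1 ∧ 0 ≤ p.2

def L (u v x y : ℤ) : ℕ :=
  if 0 ≤ u ∧ 0 ≤ v ∧ 0 ≤ y ∧ y ≤ x ∧ u - v ≤ x - y ∧ v - u ≤ x - y ∧
      x - y ≤ u + v ∧ u + v ≤ x + y ∧ (x - y - u - v) % 2 = 0 then 1 else 0

def Lam (q p : ℤ × ℤ) : ℕ := L q.1 q.2 p.1 p.2

def D (u v d : ℤ) : ℕ :=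
  if 0 ≤ u ∧ 0 ≤ v ∧ u - v ≤ d ∧ v - u ≤ d ∧ d ≤ u + v then 1 else 0
def T (c t : ℤ) : ℕ := if c ≤ t then 1 else 0
lemma D_cases (u v d : ℤ) :
    (D u v d = 1 ∧ (0 ≤ u ∧ 0 ≤ v ∧ u - v ≤ d ∧ v - u ≤ d ∧ d ≤ u + v)) ∨
    (D u v d = 0 ∧ ¬ (0 ≤ u ∧ 0 ≤ v ∧ u - v ≤ d ∧ v - u ≤ d ∧ d ≤ u + v)) := by
  rw [D]; split_ifs with h
  exacts [Or.inl ⟨rfl, h⟩, Or.inr ⟨rfl, h⟩]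
set_option maxHeartbeats 1600000 in
lemma starI (u v d : ℤ) (hu : 0 ≤ u) (hv : 0 ≤ v) (hd : 0 ≤ d) (hduv : d ≤ u + v)
    (hpar : (d - u - v) % 2 = 1) :
    D u v (d-1) + D u v (d+1) = D u (v-1) d + D (u-1) v d := by
  have h1 := D_cases u v (d-1)
  have h2 := D_cases u v (d+1)
  have h3 := D_cases u (v-1) d
  have h4 := D_cases (u-1) v d
  omega
set_option maxHeartbeats 1600000 in
lemma starII (u v d : ℤ) (hu : 0 ≤ u) (hv : 0 ≤ v) (hd : 0 ≤ d)
    (hpar : (d - u - v) % 2 = 1) :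
    2 * (D u v (d-1) + D u v (d+1)) = D u (v-1) d + D (u-1) v d + D u (v+1) d + D (u+1) v d := by
  have h1 := D_cases u v (d-1)
  have h2 := D_cases u v (d+1)
  have h3 := D_cases u (v-1) d
  have h4 := D_cases (u-1) v d
  have h5 := D_cases u (v+1) d
  have h6 := D_cases (u+1) v d
  omega

lemma T_pos {c t : ℤ} (h : c ≤ t) : T c t = 1 := by rw [T, if_pos h]
lemma T_neg {c t : ℤ} (h : ¬ c ≤ t) : T c t = 0 := by rw [T, if_neg h]

lemma starDT (u v d t : ℤ) (hu : 0 ≤ u) (hv : 0 ≤ v) (hd : 0 ≤ d) (hdt : d ≤ t)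
    (hpar : (d - u - v) % 2 = 1) :
    D u v (d-1) * T (u+v) (t+1) + D u v (d+1) * T (u+v) (t-1) +
      D u v (d+1) * T (u+v) (t+1) + D u v (d-1) * T (u+v) (t-1)
    = D u (v-1) d * T (u+v-1) t + D u (v+1) d * T (u+v+1) t +
      D (u-1) v d * T (u+v-1) t + D (u+1) v d * T (u+v+1) t := by
  rcases (by omega : u + v + 1 ≤ t ∨ (u + v - 1 ≤ t ∧ t ≤ u + v) ∨ t ≤ u + v - 2) with h | ⟨h1, h2⟩ | h
  · rw [T_pos (by omega), T_pos (by omega), T_pos (by omega), T_pos (by omega)]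
    have := starII u v d hu hv hd hpar
    omega
  · rw [T_pos (by omega), T_neg (by omega), T_pos (by omega), T_neg (by omega)]
    have := starI u v d hu hv hd (by omega) hpar
    omega
  · rw [T_neg (by omega), T_neg (by omega), T_neg (by omega), T_neg (by omega)]
    omega

lemma L_eq_zero {u v x y : ℤ} (h : (x - y - u - v) % 2 = 1) : L u v x y = 0 := by
  rw [L, if_neg]; omega

lemma L_eq_DT {u v x y : ℤ} (h : (x - y - u - v) % 2 = 0) :
    L u v x y = D u v (x - y) * T (u + v) (x + y) := by
  rw [L, D, T]; split_ifs <;> omega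

lemma star {u v x y : ℤ} (hu : 0 ≤ u) (hv : 0 ≤ v) (hy : 0 ≤ y) (hxy : y ≤ x) :
    L u v x (y+1) + L u v x (y-1) + L u v (x+1) y + L u v (x-1) y
      = L u (v-1) x y + L u (v+1) x y + L (u-1) v x y + L (u+1) v x y := by
  rcases (by omega : (x - y - u - v) % 2 = 0 ∨ (x - y - u - v) % 2 = 1) with hpar | hpar
  · rw [L_eq_zero (by omega), L_eq_zero (by omega), L_eq_zero (by omega), L_eq_zero (by omega),
      L_eq_zero (by omega), L_eq_zero (by omega), L_eq_zero (by omega), L_eq_zero (by omega)]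
  · have e1 : L u v x (y+1) = D u v (x - y - 1) * T (u+v) (x + y + 1) := by
      rw [L_eq_DT (by omega)]
      congr 1
      · congr 1; ring
      · congr 1; ring
    have e2 : L u v x (y-1) = D u v (x - y + 1) * T (u+v) (x + y - 1) := by
      rw [L_eq_DT (by omega)]
      congr 1
      · congr 1; ring
      · congr 1; ring
    have e3 : L u v (x+1) y = D u v (x - y + 1) * T (u+v) (x + y + 1) := by
      rw [L_eq_DT (by omega)]
      congr 1
      · congr 1; ring
      · congr 1; ring
    have e4 : L u v (x-1) y = D u v (x - y - 1) * T (u+v) (x + y - 1) := by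
      rw [L_eq_DT (by omega)]
      congr 1
      · congr 1; ring
      · congr 1; ring
    have f1 : L u (v-1) x y = D u (v-1) (x-y) * T (u+v-1) (x+y) := by
      rw [L_eq_DT (by omega)]
      congr 2; ring
    have f2 : L u (v+1) x y = D u (v+1) (x-y) * T (u+v+1) (x+y) := by
      rw [L_eq_DT (by omega)]
      congr 2; ring
    have f3 : L (u-1) v x y = D (u-1) v (x-y) * T (u+v-1) (x+y) := by
      rw [L_eq_DT (by omega)]
      congr 2; ring
    have f4 : L (u+1) v x y = D (u+1) v (x-y) * T (u+v+1) (x+y) := by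
      rw [L_eq_DT (by omega)]
      congr 2; ring
    rw [e1, e2, e3, e4, f1, f2, f3, f4]
    have := starDT u v (x - y) (x + y) hu hv (by omega) (by omega) (by omega)
    have a1 : x - y - 1 = (x - y) - 1 := by ring
    have a2 : x + y + 1 = (x + y) + 1 := by ring
    omega

end W10

namespace W10

lemma Lam_zero_of_not_quad {q p : ℤ × ℤ} (h : ¬ Pquad q) : Lam q p = 0 := by
  rw [Lam, L, if_neg]
  rw [Pquad] at h
  tauto

lemma Poct_of_Lam_ne_zero {q p : ℤ × ℤ} (h : Lam q p ≠ 0) : Poct p := by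
  rw [Lam, L] at h
  rw [Poct]
  split_ifs at h with hc
  · exact ⟨by omega, hc.2.2.1⟩
  · exact absurd rfl h

lemma box_mono (n : ℕ) : box n ⊆ box (n+1) := by
  intro p hp
  rw [mem_box] at hp ⊢
  push_cast
  omega

lemma sum_translate (n : ℕ) (s : Fin 4) (f g : ℤ × ℤ → ℕ)
    (hg : ∀ p, g p ≠ 0 → p ∈ box n) :
    ∑ p ∈ box (n+1), f (p + stepv s) * g p
      = ∑ p ∈ box (n+1), f p * g (p - stepv s) := by
  classical
  have hs := stepv_bound s
  have h1 : ∑ p ∈ box n, f (p + stepv s) * g p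
      = ∑ p ∈ box (n+1), f (p + stepv s) * g p := by
    refine Finset.sum_subset (box_mono n) fun p _ hnp => ?_
    rcases Nat.eq_zero_or_pos (g p) with h | h
    · rw [h, mul_zero]
    · exact absurd (hg p (by omega)) hnp
  have h2 : (box n).image (· + stepv s) ⊆ box (n+1) := by
    intro p hp
    rw [Finset.mem_image] at hp
    obtain ⟨r, hr, hrp⟩ := hp
    rw [mem_box] at hr ⊢
    subst hrp
    push_cast
    simp only [Prod.fst_add, Prod.snd_add]
    constructor <;> constructor <;> omega
  have h3 : ∑ p ∈ (box n).image (· + stepv s), f p * g (p - stepv s)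
      = ∑ p ∈ box (n+1), f p * g (p - stepv s) := by
    refine Finset.sum_subset h2 fun p hp hnp => ?_
    rcases Nat.eq_zero_or_pos (g (p - stepv s)) with h | h
    · rw [h, mul_zero]
    · exact absurd (Finset.mem_image.mpr ⟨p - stepv s, hg _ (by omega), by ring⟩) hnp
  have h4 : ∑ p ∈ (box n).image (· + stepv s), f p * g (p - stepv s)
      = ∑ p ∈ box n, f (p + stepv s) * g p := by
    rw [Finset.sum_image (fun a _ b _ h => by simpa using congrArg (· - stepv s) h)]
    exact Finset.sum_congr rfl fun p _ => by rw [add_sub_cancel_right]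
  rw [← h1, ← h4, h3]

end W10

namespace W10

lemma key_swap {q p : ℤ × ℤ} (hq : Pquad q) (hp : Poct p) :
    ∑ s : Fin 4, Lam (q - stepv s) p = ∑ s : Fin 4, Lam q (p + stepv s) := by
  rw [Fin.sum_univ_four, Fin.sum_univ_four]
  obtain ⟨q1, q2⟩ := q
  obtain ⟨p1, p2⟩ := p
  obtain ⟨hq1, hq2⟩ := hq
  obtain ⟨hp1, hp2⟩ := hp
  simp only [stepv, Matrix.cons_val_zero, Matrix.cons_val_one, Matrix.head_cons,
    Matrix.cons_val_two, Matrix.tail_cons, Matrix.cons_val_three, Lam,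
    Prod.mk_sub_mk, Prod.mk_add_mk, sub_zero, add_zero, sub_neg_eq_add]
  have h := star (u := q1) (v := q2) (x := p1) (y := p2) hq1 hq2 hp2 hp1
  have e1 : p2 + -1 = p2 - 1 := by ring
  have e2 : p1 + -1 = p1 - 1 := by ring
  rw [e1, e2]
  omega

lemma IDN (n : ℕ) (q : ℤ × ℤ) :
    C Pquad n q = ∑ p ∈ box n, Lam q p * C Poct n p := by
  induction n generalizing q with
  | zero =>
    have hbox : box 0 = {((0:ℤ), (0:ℤ))} := by
      rw [box]
      norm_num
    rw [hbox, Finset.sum_singleton]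
    have hz : ((0:ℤ), (0:ℤ)) = (0 : ℤ × ℤ) := rfl
    rw [C_zero (P := Pquad) ⟨le_rfl, le_rfl⟩, C_zero (P := Poct) ⟨le_rfl, le_rfl⟩,
      hz, if_pos rfl, mul_one]
    obtain ⟨q1, q2⟩ := q
    rw [Lam]
    simp only [L, Prod.mk_eq_zero, Prod.fst_zero, Prod.snd_zero]
    split_ifs <;> omega
  | succ n ih =>
    by_cases hq : Pquad q
    · rw [C_succ _ _ _ hq]
      calc ∑ s : Fin 4, C Pquad n (q - stepv s)
          = ∑ s : Fin 4, ∑ p ∈ box (n+1), Lam (q - stepv s) p * C Poct n p := by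
            refine Finset.sum_congr rfl fun s _ => ?_
            rw [ih]
            refine Finset.sum_subset (box_mono n) fun p _ hnp => ?_
            rcases Nat.eq_zero_or_pos (C Poct n p) with h0 | h0
            · rw [h0, mul_zero]
            · exact absurd (C_end_mem_box (P := Poct) (by omega)) hnp
        _ = ∑ p ∈ box (n+1), ∑ s : Fin 4, Lam (q - stepv s) p * C Poct n p :=
            Finset.sum_comm
        _ = ∑ p ∈ box (n+1), ∑ s : Fin 4, Lam q (p + stepv s) * C Poct n p := by
            refine Finset.sum_congr rfl fun p _ => ?_
            rcases Nat.eq_zero_or_pos (C Poct n p) with h0 | h0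
            · simp [h0]
            · have hoct : Poct p := C_P_of_ne_zero (n := n) (by omega)
              rw [← Finset.sum_mul, ← Finset.sum_mul, key_swap hq hoct]
        _ = ∑ s : Fin 4, ∑ p ∈ box (n+1), Lam q (p + stepv s) * C Poct n p :=
            Finset.sum_comm
        _ = ∑ s : Fin 4, ∑ p ∈ box (n+1), Lam q p * C Poct n (p - stepv s) := by
            refine Finset.sum_congr rfl fun s _ =>
              sum_translate n s (Lam q) (C Poct n) fun p hp => C_end_mem_box hp
        _ = ∑ p ∈ box (n+1), Lam q p * ∑ s : Fin 4, C Poct n (p - stepv s) := by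
            rw [Finset.sum_comm]
            exact Finset.sum_congr rfl fun p _ => (Finset.mul_sum _ _ _).symm
        _ = ∑ p ∈ box (n+1), Lam q p * C Poct (n+1) p := by
            refine Finset.sum_congr rfl fun p _ => ?_
            rcases Nat.eq_zero_or_pos (Lam q p) with h0 | h0
            · rw [h0, zero_mul, zero_mul]
            · have hoct : Poct p := Poct_of_Lam_ne_zero (q := q) (by omega)
              rw [C_succ _ _ _ hoct]
    · rw [C_eq_zero hq]
      symm
      refine Finset.sum_eq_zero fun p _ => ?_
      rw [Lam_zero_of_not_quad hq, zero_mul]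

end W10

namespace W10

def idx (z : ℤ × ℤ) : Fin 4 :=
  if z = (0,1) then 0 else if z = (0,-1) then 1 else if z = (1,0) then 2 else 3

lemma stepv_idx {z : ℤ × ℤ} (h : z = (0,1) ∨ z = (0,-1) ∨ z = (1,0) ∨ z = (-1,0)) :
    stepv (idx z) = z := by
  rcases h with h | h | h | h <;> subst h <;> norm_num [idx, stepv] <;> rfl

lemma idx_stepv (s : Fin 4) : idx (stepv s) = s := by
  fin_cases s <;> decide

lemma isWalk_stepv {n : ℕ} (f : Fin n → Fin 4) : IsWalk (stepv ∘ f) := by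
  intro l
  have : ∀ s : Fin 4, stepv s = (0,1) ∨ stepv s = (0,-1) ∨ stepv s = (1,0) ∨ stepv s = (-1,0) := by
    decide
  exact this (f l)

def walkEquiv {n : ℕ} (Φ : (Fin n → ℤ × ℤ) → Prop) :
    {w : Fin n → ℤ × ℤ // IsWalk w ∧ Φ w} ≃ {f : Fin n → Fin 4 // Φ (stepv ∘ f)} where
  toFun w := ⟨idx ∘ w.1, by
    have hw : stepv ∘ (idx ∘ w.1) = w.1 := funext fun l => stepv_idx (w.2.1 l)
    rw [hw]; exact w.2.2⟩
  invFun f := ⟨stepv ∘ f.1, isWalk_stepv f.1, f.2⟩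
  left_inv w := Subtype.ext (funext fun l => stepv_idx (w.2.1 l))
  right_inv f := Subtype.ext (funext fun l => idx_stepv (f.1 l))

lemma card_partition {α : Type*} [Finite α] (n : ℕ) (e : α → ℤ × ℤ)
    (he : ∀ a, e a ∈ box n) :
    Nat.card α = ∑ p ∈ box n, Nat.card {a : α // e a = p} := by
  classical
  calc Nat.card α = ∑ i : ↥(box n), Nat.card {a : α // e a = ↑i} := by
        rw [card_fiber (g := fun a => (⟨e a, he a⟩ : ↥(box n)))]
        exact Finset.sum_congr rfl fun i _ => Nat.card_congr
          (Equiv.subtypeEquivRight fun a =>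
            ⟨fun h => by rw [← h], fun h => Subtype.ext h⟩)
    _ = ∑ p ∈ box n, Nat.card {a : α // e a = p} :=
        Finset.sum_coe_sort (box n) (fun p => Nat.card {a : α // e a = p})

lemma axis_sum {n : ℕ} {r : ℤ × ℤ} (hoct : Poct r) (hbox : r ∈ box n) :
    ∑ p ∈ box n, (if p.2 = 0 then 1 else 0) * Lam p r = 1 := by
  obtain ⟨h1, h2⟩ := hoct
  rw [Finset.sum_eq_single ((r.1 - r.2, 0) : ℤ × ℤ)]
  · rw [if_pos rfl, one_mul, Lam, L, if_pos]
    refine ⟨by omega, le_rfl, h2, by omega, by omega, by omega, by omega, by omega, by omega⟩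
  · intro b _ hne
    by_cases hb2 : b.2 = 0
    · rw [if_pos hb2, one_mul, Lam, L, if_neg]
      intro hc
      have hb1 : b.1 ≠ r.1 - r.2 := fun h => hne (Prod.ext h hb2)
      omega
    · rw [if_neg hb2, zero_mul]
  · intro hmem
    rw [mem_box] at hbox
    exact absurd (mem_box.mpr (by constructor <;> constructor <;> omega)) hmem

end W10


open W10

theorem stmt10 (n : ℕ) :
    Nat.card {w : Fin n → ℤ × ℤ //
      IsWalk w ∧ (∀ a ≤ n, (pos w a).2 ≤ (pos w a).1 ∧ 0 ≤ (pos w a).2)} =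
    Nat.card {w : Fin n → ℤ × ℤ //
      IsWalk w ∧ (∀ a ≤ n, 0 ≤ (pos w a).1 ∧ 0 ≤ (pos w a).2) ∧ (pos w n).2 = 0} := by
  have hL : Nat.card {w : Fin n → ℤ × ℤ //
      IsWalk w ∧ (∀ a ≤ n, (pos w a).2 ≤ (pos w a).1 ∧ 0 ≤ (pos w a).2)}
      = ∑ p ∈ box n, C Poct n p := by
    rw [Nat.card_congr (walkEquiv (fun w => ∀ a ≤ n, (pos w a).2 ≤ (pos w a).1 ∧ 0 ≤ (pos w a).2))]
    rw [card_partition n (fun f => pos (stepv ∘ f.1) n) (fun f => pos_bound n f.1)]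
    refine Finset.sum_congr rfl fun p hp => ?_
    rw [C]
    exact Nat.card_congr (Equiv.subtypeSubtypeEquivSubtypeInter
      (fun f : Fin n → Fin 4 => ∀ a ≤ n, Poct (pos (stepv ∘ f) a))
      (fun f => pos (stepv ∘ f) n = p))
  have hR : Nat.card {w : Fin n → ℤ × ℤ //
      IsWalk w ∧ (∀ a ≤ n, 0 ≤ (pos w a).1 ∧ 0 ≤ (pos w a).2) ∧ (pos w n).2 = 0}
      = ∑ p ∈ box n, (if p.2 = 0 then 1 else 0) * C Pquad n p := by
    rw [Nat.card_congr (walkEquiv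
      (fun w => (∀ a ≤ n, 0 ≤ (pos w a).1 ∧ 0 ≤ (pos w a).2) ∧ (pos w n).2 = 0))]
    rw [card_partition n (fun f => pos (stepv ∘ f.1) n) (fun f => pos_bound n f.1)]
    refine Finset.sum_congr rfl fun p hp => ?_
    by_cases hp2 : p.2 = 0
    · rw [if_pos hp2, one_mul, C]
      refine Nat.card_congr ?_
      refine (Equiv.subtypeSubtypeEquivSubtypeInter
        (fun f : Fin n → Fin 4 => (∀ a ≤ n, 0 ≤ (pos (stepv ∘ f) a).1 ∧
          0 ≤ (pos (stepv ∘ f) a).2) ∧ (pos (stepv ∘ f) n).2 = 0)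
        (fun f => pos (stepv ∘ f) n = p)).trans
        (Equiv.subtypeEquivRight fun f => ?_)
      constructor
      · rintro ⟨⟨h1, h2⟩, h3⟩
        exact ⟨h1, h3⟩
      · rintro ⟨h1, h3⟩
        exact ⟨⟨h1, by rw [h3, hp2]⟩, h3⟩
    · rw [if_neg hp2, zero_mul]
      rw [Nat.card_eq_zero]
      left
      constructor
      rintro ⟨⟨f, hf, h2⟩, h3⟩
      exact hp2 (h3 ▸ h2)
  rw [hL, hR]
  symm
  calc ∑ p ∈ box n, (if p.2 = 0 then 1 else 0) * C Pquad n p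
      = ∑ p ∈ box n, (if p.2 = 0 then 1 else 0) *
          ∑ r ∈ box n, Lam p r * C Poct n r := by
        exact Finset.sum_congr rfl fun p _ => by rw [IDN]
    _ = ∑ p ∈ box n, ∑ r ∈ box n,
          ((if p.2 = 0 then 1 else 0) * Lam p r) * C Poct n r := by
        refine Finset.sum_congr rfl fun p _ => ?_
        rw [Finset.mul_sum]
        exact Finset.sum_congr rfl fun r _ => by ring
    _ = ∑ r ∈ box n, (∑ p ∈ box n, (if p.2 = 0 then 1 else 0) * Lam p r) * C Poct n r := by
        rw [Finset.sum_comm]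
        exact Finset.sum_congr rfl fun r _ => (Finset.sum_mul _ _ _).symm
    _ = ∑ r ∈ box n, C Poct n r := by
        refine Finset.sum_congr rfl fun r hr => ?_
        rcases Nat.eq_zero_or_pos (C Poct n r) with h0 | h0
        · rw [h0, mul_zero]
        · rw [axis_sum (C_P_of_ne_zero (n := n) (by omega)) hr, one_mul]
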